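/- Let Σ ∈ ℝ^{2n×2n} be symmetric with block partition Σ = [[Σ₁₁, Σ₁₂],[Σ₂₁, Σ₂₂]] into n×n blocks (so Σ₁₂ = Σ₂₁ᵀ), with Σ₂₂ invertible. Let F ∈ ℝ^{r×n} and let G ∈ ℝ^{r×p₂} have full column rank (so GᵀG is invertible). Suppose c₀ ∈ ℝ^{p₂×n} satisfies Σ₂₁FᵀG + Σ₂₂ c₀ᵀ GᵀG = 0. Then: (i) c₀ = −(GᵀG)⁻¹GᵀF Σ₁₂ Σ₂₂⁻¹; (ii) with 𝒞 := [F, Gc₀] ∈ ℝ^{r×2n}, the lower-right n×n block of 𝒞ᵀ𝒞Σ is zero; (iii) if, in addition, c₀ has full column rank and, for given B ∈ ℝ^{n×m₁}, C ∈ ℝ^{p₁×n}, D ∈ ℝ^{p₁×m₁}, the matrix e₀ ∈ ℝ^{n×p₁} satisfies (𝒞ᵀ𝒞Σ)₂₁ Cᵀ + (𝒞ᵀ𝒞)₂₁ B Dᵀ + (𝒞ᵀ𝒞)₂₂ e₀ = 0 (where the subscripts denote the n×n blocks), then e₀ = −Σ₂₁Cᵀ − (c₀ᵀGᵀGc₀)⁻¹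 c₀ᵀGᵀF (Σ₁₁Cᵀ + BDᵀ). -/

import Mathlib

open Matrix

lemma isUnit_det_of_rank_eq {k : ℕ} (A : Matrix (Fin k) (Fin k) ℝ) (h : A.rank = k) :
    IsUnit A.det := by
  rw [← Matrix.isUnit_iff_isUnit_det, ← Matrix.mulVec_surjective_iff_isUnit]
  have hrange : LinearMap.range A.mulVecLin = ⊤ :=
    Submodule.eq_top_of_finrank_eq (by
      rw [show Module.finrank ℝ ↥(LinearMap.range A.mulVecLin) = A.rank from rfl, h,
        Module.finrank_fin_fun])
  have hs := LinearMap.range_eq_top.mp hrange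
  rw [Matrix.coe_mulVecLin] at hs
  exact hs

theorem zero_horizon_controller_limit
    {n r p₂ p₁ m₁ : ℕ}
    (S₁₁ S₁₂ S₂₁ S₂₂ : Matrix (Fin n) (Fin n) ℝ)
    (hS₁₁ : S₁₁ᵀ = S₁₁) (hS₂₂ : S₂₂ᵀ = S₂₂) (hS₁₂ : S₁₂ = S₂₁ᵀ)
    (hS₂₂inv : IsUnit S₂₂.det)
    (F : Matrix (Fin r) (Fin n) ℝ)
    (G : Matrix (Fin r) (Fin p₂) ℝ) (hG : G.rank = p₂)
    (c₀ : Matrix (Fin p₂) (Fin n) ℝ)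
    (hc₀ : S₂₁ * Fᵀ * G + S₂₂ * c₀ᵀ * (Gᵀ * G) = 0)
    (𝒞 : Matrix (Fin r) (Fin n ⊕ Fin n) ℝ) (h𝒞 : 𝒞 = fromCols F (G * c₀))
    (Sfull : Matrix (Fin n ⊕ Fin n) (Fin n ⊕ Fin n) ℝ)
    (hSfull : Sfull = fromBlocks S₁₁ S₁₂ S₂₁ S₂₂) :
    c₀ = -((Gᵀ * G)⁻¹ * Gᵀ * F * S₁₂ * S₂₂⁻¹) ∧
    toBlocks₂₂ (𝒞ᵀ * 𝒞 * Sfull) = 0 ∧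
    (∀ (B : Matrix (Fin n) (Fin m₁) ℝ) (C : Matrix (Fin p₁) (Fin n) ℝ)
        (D : Matrix (Fin p₁) (Fin m₁) ℝ) (e₀ : Matrix (Fin n) (Fin p₁) ℝ),
      c₀.rank = n →
      toBlocks₂₁ (𝒞ᵀ * 𝒞 * Sfull) * Cᵀ + toBlocks₂₁ (𝒞ᵀ * 𝒞) * B * Dᵀ +
        toBlocks₂₂ (𝒞ᵀ * 𝒞) * e₀ = 0 →
      e₀ = -(S₂₁ * Cᵀ) -
        (c₀ᵀ * Gᵀ * G * c₀)⁻¹ * c₀ᵀ * Gᵀ * F * (S₁₁ * Cᵀ + B * Dᵀ)) := by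
  subst h𝒞 hSfull
  have hM : IsUnit (Gᵀ * G).det :=
    isUnit_det_of_rank_eq _ (by rw [rank_transpose_mul_self]; exact hG)
  -- transposed key relation
  have key : Gᵀ * F * S₁₂ + Gᵀ * G * (c₀ * S₂₂) = 0 := by
    have h := congrArg Matrix.transpose hc₀
    simp only [Matrix.transpose_add, Matrix.transpose_mul, Matrix.transpose_transpose,
      hS₂₂, ← hS₁₂, Matrix.transpose_zero] at h
    calc Gᵀ * F * S₁₂ + Gᵀ * G * (c₀ * S₂₂)
        = Gᵀ * (F * S₁₂) + Gᵀ * G * (S₂₂ * c₀ᵀ)ᵀ := by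
          rw [Matrix.transpose_mul, hS₂₂, Matrix.transpose_transpose, Matrix.mul_assoc]
      _ = 0 := by rw [← h]; rw [Matrix.transpose_mul, hS₂₂, Matrix.transpose_transpose]
  have hkey2 : Gᵀ * G * (c₀ * S₂₂) = -(Gᵀ * F * S₁₂) :=
    by linear_combination (norm := module) key
  have hi : c₀ = -((Gᵀ * G)⁻¹ * Gᵀ * F * S₁₂ * S₂₂⁻¹) := by
    have h1 : c₀ * S₂₂ = -((Gᵀ * G)⁻¹ * (Gᵀ * F * S₁₂)) := by
      rw [← Matrix.nonsing_inv_mul_cancel_left (Gᵀ * G) (c₀ * S₂₂) hM, hkey2, Matrix.mul_neg]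
    calc c₀ = c₀ * S₂₂ * S₂₂⁻¹ := (Matrix.mul_nonsing_inv_cancel_right _ _ hS₂₂inv).symm
      _ = -((Gᵀ * G)⁻¹ * Gᵀ * F * S₁₂ * S₂₂⁻¹) := by
          rw [h1]; simp only [Matrix.neg_mul, Matrix.mul_assoc]
  -- block computation
  have hCC : (fromCols F (G * c₀))ᵀ * fromCols F (G * c₀) =
      fromBlocks (Fᵀ * F) (Fᵀ * (G * c₀)) ((G * c₀)ᵀ * F) ((G * c₀)ᵀ * (G * c₀)) := by
    rw [transpose_fromCols, fromRows_mul_fromCols]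
  have hCCS : (fromCols F (G * c₀))ᵀ * fromCols F (G * c₀) * fromBlocks S₁₁ S₁₂ S₂₁ S₂₂ =
      fromBlocks (Fᵀ * F * S₁₁ + Fᵀ * (G * c₀) * S₂₁) (Fᵀ * F * S₁₂ + Fᵀ * (G * c₀) * S₂₂)
        ((G * c₀)ᵀ * F * S₁₁ + (G * c₀)ᵀ * (G * c₀) * S₂₁)
        ((G * c₀)ᵀ * F * S₁₂ + (G * c₀)ᵀ * (G * c₀) * S₂₂) := by
    rw [hCC, fromBlocks_multiply]
  have hb22 : (G * c₀)ᵀ * F * S₁₂ + (G * c₀)ᵀ * (G * c₀) * S₂₂ = 0 := by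
    have : (G * c₀)ᵀ * F * S₁₂ + (G * c₀)ᵀ * (G * c₀) * S₂₂ =
        c₀ᵀ * (Gᵀ * F * S₁₂ + Gᵀ * G * (c₀ * S₂₂)) := by
      rw [Matrix.transpose_mul]
      simp only [Matrix.mul_add, Matrix.mul_assoc]
    rw [this, key, Matrix.mul_zero]
  refine ⟨hi, ?_, ?_⟩
  · rw [hCCS, toBlocks_fromBlocks₂₂, hb22]
  · intro B C D e₀ hc₀rank heq
    -- N := c₀ᵀ * Gᵀ * G * c₀ is invertible
    have hNrank : ((G * c₀)ᵀ * (G * c₀)).rank = n := by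
      rw [rank_transpose_mul_self]
      refine le_antisymm ?_ ?_
      · calc (G * c₀).rank ≤ c₀.rank := rank_mul_le_right G c₀
          _ = n := hc₀rank
      · calc n = c₀.rank := hc₀rank.symm
          _ = (Gᵀ * G * c₀).rank := (rank_mul_eq_right_of_isUnit_det (Gᵀ * G) c₀ hM).symm
          _ = (Gᵀ * (G * c₀)).rank := by rw [Matrix.mul_assoc]
          _ ≤ (G * c₀).rank := rank_mul_le_right Gᵀ (G * c₀)
    have hN : IsUnit ((G * c₀)ᵀ * (G * c₀)).det := isUnit_det_of_rank_eq _ hNrank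
    have hNe : (G * c₀)ᵀ * (G * c₀) = c₀ᵀ * Gᵀ * G * c₀ := by
      rw [Matrix.transpose_mul]; simp only [Matrix.mul_assoc]
    rw [hCCS, hCC, toBlocks_fromBlocks₂₁, toBlocks_fromBlocks₂₁, toBlocks_fromBlocks₂₂] at heq
    -- heq : ((Gc₀)ᵀF S₁₁ + (Gc₀)ᵀ(Gc₀) S₂₁) Cᵀ + (Gc₀)ᵀF B Dᵀ + (Gc₀)ᵀ(Gc₀) e₀ = 0
    have heq2 : (G * c₀)ᵀ * (G * c₀) * (S₂₁ * Cᵀ + e₀) =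
        -((G * c₀)ᵀ * F * (S₁₁ * Cᵀ + B * Dᵀ)) := by
      refine eq_neg_of_add_eq_zero_left ?_
      calc (G * c₀)ᵀ * (G * c₀) * (S₂₁ * Cᵀ + e₀) + (G * c₀)ᵀ * F * (S₁₁ * Cᵀ + B * Dᵀ)
          = ((G * c₀)ᵀ * F * S₁₁ + (G * c₀)ᵀ * (G * c₀) * S₂₁) * Cᵀ + (G * c₀)ᵀ * F * B * Dᵀ +
            (G * c₀)ᵀ * (G * c₀) * e₀ := by
            simp only [Matrix.mul_add, Matrix.add_mul, Matrix.mul_assoc]; abel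
        _ = 0 := heq
    have h3 : S₂₁ * Cᵀ + e₀ =
        -(((G * c₀)ᵀ * (G * c₀))⁻¹ * ((G * c₀)ᵀ * F * (S₁₁ * Cᵀ + B * Dᵀ))) := by
      rw [← Matrix.nonsing_inv_mul_cancel_left ((G * c₀)ᵀ * (G * c₀)) (S₂₁ * Cᵀ + e₀) hN,
        heq2, Matrix.mul_neg]
    have : e₀ = -(S₂₁ * Cᵀ) -
        ((G * c₀)ᵀ * (G * c₀))⁻¹ * ((G * c₀)ᵀ * F * (S₁₁ * Cᵀ + B * Dᵀ)) := by
      linear_combination (norm := module) h3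
    rw [this, hNe]
    congr 1
    rw [← hNe]
    simp only [Matrix.transpose_mul, Matrix.mul_assoc]
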